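/- If the energy–momentum endomorphism Q is positive semidefinite (i.e. ⟨λ, Qλ⟩ ≥ 0 for every λ ∈ ℂ⁴) and the three vectors c, c', J are linearly dependent (equivalently V = 0, i.e. c·(c'×J) = 0), then E₀ ≥ √(L² + 2·A²). -/

import Mathlib

open Matrix Complex ComplexOrder

/-- The energy–momentum endomorphism `Q` of an asymptotically anti-de Sitter
initial data set, as a 4×4 complex matrix. -/
noncomputable def QMatrix (E₀ c₁ c₂ c₃ c₁' c₂' c₃' J₁ J₂ J₃ : ℝ) :
    Matrix (Fin 4) (Fin 4) ℂ :=
  let w₁ : ℂ := (c₃' : ℂ) - I * J₃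
  let w₂p : ℂ := -(c₁' : ℂ) + (J₂ : ℂ) + I * ((c₂' : ℂ) + J₁)
  let w₂m : ℂ := -(c₁' : ℂ) - (J₂ : ℂ) - I * ((c₂' : ℂ) - J₁)
  !![(E₀ : ℂ) - c₃, (c₁ : ℂ) - I * c₂, w₁, w₂p;
     (c₁ : ℂ) + I * c₂, (E₀ : ℂ) + c₃, w₂m, -w₁;
     starRingEnd ℂ w₁, starRingEnd ℂ w₂m, (E₀ : ℂ) + c₃, -(c₁ : ℂ) + I * c₂;
     starRingEnd ℂ w₂p, -(starRingEnd ℂ w₁), -(c₁ : ℂ) - I * c₂, (E₀ : ℂ) - c₃]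

set_option maxHeartbeats 1000000 in
/-- Explicit expansion of a 4×4 determinant. -/
theorem det_fin_four' {R : Type*} [CommRing R] (A : Matrix (Fin 4) (Fin 4) R) :
    A.det =
      A 0 0 * (A 1 1 * (A 2 2 * A 3 3 - A 2 3 * A 3 2) - A 1 2 * (A 2 1 * A 3 3 - A 2 3 * A 3 1)
        + A 1 3 * (A 2 1 * A 3 2 - A 2 2 * A 3 1))
    - A 0 1 * (A 1 0 * (A 2 2 * A 3 3 - A 2 3 * A 3 2) - A 1 2 * (A 2 0 * A 3 3 - A 2 3 * A 3 0)
        + A 1 3 * (A 2 0 * A 3 2 - A 2 2 * A 3 0))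
    + A 0 2 * (A 1 0 * (A 2 1 * A 3 3 - A 2 3 * A 3 1) - A 1 1 * (A 2 0 * A 3 3 - A 2 3 * A 3 0)
        + A 1 3 * (A 2 0 * A 3 1 - A 2 1 * A 3 0))
    - A 0 3 * (A 1 0 * (A 2 1 * A 3 2 - A 2 2 * A 3 1) - A 1 1 * (A 2 0 * A 3 2 - A 2 2 * A 3 0)
        + A 1 2 * (A 2 0 * A 3 1 - A 2 1 * A 3 0)) := by
  rw [Matrix.det_succ_row_zero]
  simp [Fin.sum_univ_succ, Matrix.det_fin_three, Fin.succAbove,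
    (show (Fin.succ 2 : Fin 4) = 3 from rfl), (show (Fin.castSucc 2 : Fin 4) = 2 from rfl),
    (show (Fin.succ 1 : Fin 4) = 2 from rfl), (show (Fin.castSucc 1 : Fin 4) = 1 from rfl),
    (show (Fin.succ 0 : Fin 4) = 1 from rfl), (show (Fin.castSucc 0 : Fin 4) = 0 from rfl)]
  ring

set_option maxHeartbeats 2000000 in
/-- The key determinant computation: at the shifted energy `s = √(L²+2A²)`, the
energy–momentum matrix is singular (in the degenerate case `V = 0`). -/
theorem QMatrix_det_eq_zero (s c₁ c₂ c₃ c₁' c₂' c₃' J₁ J₂ J₃ L A : ℝ)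
    (hs2 : s ^ 2 = L ^ 2 + 2 * A ^ 2)
    (hL' : L ^ 2 = c₁^2 + c₂^2 + c₃^2 + c₁'^2 + c₂'^2 + c₃'^2 + J₁^2 + J₂^2 + J₃^2)
    (hA' : A ^ 4 =
      (c₂*c₃' - c₃*c₂')^2 + (c₃*c₁' - c₁*c₃')^2 + (c₁*c₂' - c₂*c₁')^2
    + (c₂*J₃ - c₃*J₂)^2 + (c₃*J₁ - c₁*J₃)^2 + (c₁*J₂ - c₂*J₁)^2
    + (c₂'*J₃ - c₃'*J₂)^2 + (c₃'*J₁ - c₁'*J₃)^2 + (c₁'*J₂ - c₂'*J₁)^2)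
    (hdep' : c₁*(c₂'*J₃ - c₃'*J₂) + c₂*(c₃'*J₁ - c₁'*J₃) + c₃*(c₁'*J₂ - c₂'*J₁) = 0) :
    (QMatrix s c₁ c₂ c₃ c₁' c₂' c₃' J₁ J₂ J₃).det = 0 := by
  rw [det_fin_four']
  simp only [QMatrix, Matrix.cons_val', Matrix.cons_val_zero, Matrix.cons_val_one,
    Matrix.head_cons, Matrix.head_fin_const, Matrix.empty_val', Matrix.cons_val_fin_one,
    Matrix.of_apply, Matrix.cons_val_two, Matrix.cons_val_three, Matrix.tail_cons,
    map_sub, map_add, map_neg, _root_.map_mul, Complex.conj_ofReal, Complex.conj_I]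
  simp only [Complex.ext_iff, Complex.add_re, Complex.add_im, Complex.sub_re, Complex.sub_im,
    Complex.mul_re, Complex.mul_im, Complex.neg_re, Complex.neg_im, Complex.ofReal_re,
    Complex.ofReal_im, Complex.I_re, Complex.I_im, Complex.zero_re, Complex.zero_im]
  constructor
  · linear_combination
      (s^2 + L^2 + 2*A^2
        - 2*(c₁^2 + c₂^2 + c₃^2 + c₁'^2 + c₂'^2 + c₃'^2 + J₁^2 + J₂^2 + J₃^2)) * hs2
    + (L^2 - (c₁^2 + c₂^2 + c₃^2 + c₁'^2 + c₂'^2 + c₃'^2 + J₁^2 + J₂^2 + J₃^2)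
        + 4*A^2) * hL'
    + 4 * hA' + (8*s) * hdep'
  · ring

set_option maxHeartbeats 1000000 in
/-- If the energy–momentum endomorphism `Q` is positive semidefinite and the three
vectors `c`, `c'`, `J` are linearly dependent (i.e. `V = 0`, `c·(c'×J) = 0`), then
`E₀ ≥ √(L² + 2·A²)`. -/
theorem positive_energy_theorem_degenerate
    (E₀ c₁ c₂ c₃ c₁' c₂' c₃' J₁ J₂ J₃ L A : ℝ)
    (hL0 : 0 ≤ L)
    (hL : L ^ 2 = ![c₁, c₂, c₃] ⬝ᵥ ![c₁, c₂, c₃]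
      + ![c₁', c₂', c₃'] ⬝ᵥ ![c₁', c₂', c₃'] + ![J₁, J₂, J₃] ⬝ᵥ ![J₁, J₂, J₃])
    (hA0 : 0 ≤ A)
    (hA : A ^ 4 =
        (![c₁, c₂, c₃] ⨯₃ ![c₁', c₂', c₃']) ⬝ᵥ (![c₁, c₂, c₃] ⨯₃ ![c₁', c₂', c₃'])
      + (![c₁, c₂, c₃] ⨯₃ ![J₁, J₂, J₃]) ⬝ᵥ (![c₁, c₂, c₃] ⨯₃ ![J₁, J₂, J₃])
      + (![c₁', c₂', c₃'] ⨯₃ ![J₁, J₂, J₃]) ⬝ᵥ (![c₁', c₂', c₃'] ⨯₃ ![J₁, J₂, J₃]))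
    (hdep : ![c₁, c₂, c₃] ⬝ᵥ (![c₁', c₂', c₃'] ⨯₃ ![J₁, J₂, J₃]) = 0)
    (hQ : (QMatrix E₀ c₁ c₂ c₃ c₁' c₂' c₃' J₁ J₂ J₃).PosSemidef) :
    E₀ ≥ Real.sqrt (L ^ 2 + 2 * A ^ 2) := by
  set s : ℝ := Real.sqrt (L ^ 2 + 2 * A ^ 2) with hs
  have hsnn : (0:ℝ) ≤ L ^ 2 + 2 * A ^ 2 := by positivity
  have hs2 : s ^ 2 = L ^ 2 + 2 * A ^ 2 := Real.sq_sqrt hsnn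
  have hL' : L ^ 2 = c₁^2 + c₂^2 + c₃^2 + c₁'^2 + c₂'^2 + c₃'^2 + J₁^2 + J₂^2 + J₃^2 := by
    rw [hL]; simp [dotProduct, Fin.sum_univ_three] <;> ring
  have hA' : A ^ 4 =
      (c₂*c₃' - c₃*c₂')^2 + (c₃*c₁' - c₁*c₃')^2 + (c₁*c₂' - c₂*c₁')^2
    + (c₂*J₃ - c₃*J₂)^2 + (c₃*J₁ - c₁*J₃)^2 + (c₁*J₂ - c₂*J₁)^2
    + (c₂'*J₃ - c₃'*J₂)^2 + (c₃'*J₁ - c₁'*J₃)^2 + (c₁'*J₂ - c₂'*J₁)^2 := by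
    rw [hA]; simp [cross_apply, dotProduct, Fin.sum_univ_three] <;> ring
  have hdep' : c₁*(c₂'*J₃ - c₃'*J₂) + c₂*(c₃'*J₁ - c₁'*J₃) + c₃*(c₁'*J₂ - c₂'*J₁) = 0 := by
    rw [← hdep]; simp [cross_apply, dotProduct, Fin.sum_univ_three] <;> ring
  have hdet : (QMatrix s c₁ c₂ c₃ c₁' c₂' c₃' J₁ J₂ J₃).det = 0 :=
    QMatrix_det_eq_zero s c₁ c₂ c₃ c₁' c₂' c₃' J₁ J₂ J₃ L A hs2 hL' hA' hdep'
  obtain ⟨v, hv0, hv⟩ := Matrix.exists_mulVec_eq_zero_iff.mpr hdet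
  have hshift : QMatrix E₀ c₁ c₂ c₃ c₁' c₂' c₃' J₁ J₂ J₃
      = QMatrix s c₁ c₂ c₃ c₁' c₂' c₃' J₁ J₂ J₃
        + ((E₀ - s : ℝ) : ℂ) • (1 : Matrix (Fin 4) (Fin 4) ℂ) := by
    ext i j
    fin_cases i <;> fin_cases j <;>
      simp [QMatrix, Matrix.one_apply] <;> push_cast <;> ring
  have hmul : (QMatrix E₀ c₁ c₂ c₃ c₁' c₂' c₃' J₁ J₂ J₃) *ᵥ v = ((E₀ - s : ℝ) : ℂ) • v := by
    rw [hshift, Matrix.add_mulVec, hv, Matrix.smul_mulVec, Matrix.one_mulVec, zero_add]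
  have h2 := hQ.dotProduct_mulVec_nonneg v
  rw [hmul, dotProduct_smul] at h2
  have hpos : 0 < dotProduct (star v) v := dotProduct_star_self_pos_iff.mpr hv0
  rw [Complex.lt_def] at hpos
  rw [Complex.le_def] at h2
  have hre : 0 ≤ (E₀ - s) * (dotProduct (star v) v).re := by
    have h3 := h2.1
    simp only [smul_eq_mul, Complex.mul_re, Complex.ofReal_re, Complex.ofReal_im,
      Complex.zero_re, zero_mul, sub_zero] at h3
    linarith [h3]
  have htre : 0 < (dotProduct (star v) v).re := by simpa using hpos.1
  nlinarith [hre, htre]
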